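/- Let G be a finitely generated group, X a real Banach space, and V ⊆ X* a subspace. Let K ⊆ ℓ∞(G, X) be a nonempty, bounded, ℓ∞(G)-convex subset that is compact in the ultra-weak topology induced by V, let α be a G-affine action of G on K, and fix κ₀ ∈ K. Then there exists a point x₀ ∈ K such that for every map T : K → ℓ∞(G) that is ℓ∞(G)-convex and continuous from the ultra-weak topology on K to the weak-* topology of ℓ∞(G), one has T(x₀) = E(f_{[T]}); explicitly, (T(x₀))(g) = (T(α_g(κ₀)))(g) for every g ∈ G. -/

import Mathlib

open scoped ENNReal
set_option linter.unusedSectionVars false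

noncomputable section

variable {G : Type*} [Group G]
variable {X : Type*} [NormedAddCommGroup X] [NormedSpace ℝ X]

/-- Build an element of `ℓ∞(G, Z)` from a uniformly bounded function. -/
def linfElem {Z : Type*} [NormedAddCommGroup Z] (f : G → Z) (C : ℝ) (h : ∀ g, ‖f g‖ ≤ C) :
    lp (fun _ : G => Z) ∞ :=
  ⟨f, memℓp_infty ⟨C, by rintro r ⟨g, rfl⟩; exact h g⟩⟩

@[simp] lemma linfElem_apply {Z : Type*} [NormedAddCommGroup Z] (f : G → Z) (C : ℝ)
    (h : ∀ g, ‖f g‖ ≤ C) (g : G) : linfElem f C h g = f g := rfl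

/-- The action `•` of `ℓ∞(G)` on `ℓ∞(G, Z)`: `(a • f)_g = a_g f_g`. -/
def bullet {Z : Type*} [NormedAddCommGroup Z] [NormedSpace ℝ Z]
    (a : lp (fun _ : G => ℝ) ∞) (f : lp (fun _ : G => Z) ∞) :
    lp (fun _ : G => Z) ∞ :=
  linfElem (fun g => a g • f g) (‖a‖ * ‖f‖) (by
    intro g
    rw [norm_smul]
    exact mul_le_mul (lp.norm_apply_le_norm ENNReal.top_ne_zero a g)
      (lp.norm_apply_le_norm ENNReal.top_ne_zero f g) (norm_nonneg _) (norm_nonneg _))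

/-- The translation action of `G` on `ℓ∞(G)`: `(g * a)_h = a_{g⁻¹ h}`. -/
def gstar (g : G) (a : lp (fun _ : G => ℝ) ∞) : lp (fun _ : G => ℝ) ∞ :=
  linfElem (fun h => a (g⁻¹ * h)) ‖a‖
    (fun h => lp.norm_apply_le_norm ENNReal.top_ne_zero a _)

/-- A set `K ⊆ ℓ∞(G, X)` is `ℓ∞(G)`-convex if it is stable under combinations
`∑ aᵢ • xᵢ` with `aᵢ ∈ ℓ∞(G)` nonnegative, `∑ aᵢ = 1_G` and `xᵢ ∈ K`. -/
def LinfConvex (K : Set (lp (fun _ : G => X) ∞)) : Prop :=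
  ∀ (n : ℕ) (a : Fin n → lp (fun _ : G => ℝ) ∞) (x : Fin n → lp (fun _ : G => X) ∞),
    (∀ (i : Fin n) (h : G), 0 ≤ a i h) → (∀ h : G, ∑ i, a i h = 1) →
    (∀ i, x i ∈ K) → (∑ i, bullet (a i) (x i)) ∈ K

/-- A family of maps `α_g : K → K` is a `G`-affine action if `α_e = id`,
`α_{gh} = α_g ∘ α_h`, and `α_g (a • x + b • y) = (g * a) • α_g x + (g * b) • α_g y`
for all nonnegative `a, b ∈ ℓ∞(G)` with `a + b = 1_G`. -/
def IsGAffineAction (K : Set (lp (fun _ : G => X) ∞)) (α : G → K → K) : Prop :=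
  (∀ x : K, α 1 x = x) ∧
  (∀ (g h : G) (x : K), α (g * h) x = α g (α h x)) ∧
  (∀ (g : G) (a b : lp (fun _ : G => ℝ) ∞),
    (∀ h : G, 0 ≤ a h) → (∀ h : G, 0 ≤ b h) → (∀ h : G, a h + b h = 1) →
    ∀ x y z : K, (z : lp (fun _ : G => X) ∞) = bullet a ↑x + bullet b ↑y →
      (α g z : lp (fun _ : G => X) ∞) =
        bullet (gstar g a) ↑(α g x) + bullet (gstar g b) ↑(α g y))

/-- A map `T : K → ℓ∞(G)` is `ℓ∞(G)`-convex if `T (a • x + b • y) = a • T x + b • T y`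
for all nonnegative `a, b ∈ ℓ∞(G)` with `a + b = 1_G`. -/
def IsLinfConvexMap (K : Set (lp (fun _ : G => X) ∞)) (T : K → lp (fun _ : G => ℝ) ∞) :
    Prop :=
  ∀ (a b : lp (fun _ : G => ℝ) ∞),
    (∀ h : G, 0 ≤ a h) → (∀ h : G, 0 ≤ b h) → (∀ h : G, a h + b h = 1) →
    ∀ x y z : K, (z : lp (fun _ : G => X) ∞) = bullet a ↑x + bullet b ↑y →
      T z = bullet a (T x) + bullet b (T y)

/-- The action of `G` on maps `T : K → ℓ∞(G)`: `(g · T)(x) = g * (T (α_{g⁻¹} x))`. -/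
def dotT (K : Set (lp (fun _ : G => X) ∞)) (α : G → K → K) (g : G)
    (T : K → lp (fun _ : G => ℝ) ∞) : K → lp (fun _ : G => ℝ) ∞ :=
  fun x => gstar g (T (α g⁻¹ x))

end

section topologies

variable (G : Type*) [Group G]
variable (X : Type*) [NormedAddCommGroup X] [NormedSpace ℝ X]

/-- The weak-* topology on `ℓ∞(G)` as the dual of `ℓ₁(G)`: the coarsest topology making
`b ↦ ∑_g a_g b_g` continuous for every `a ∈ ℓ₁(G)`. -/
noncomputable def wstarLinf : TopologicalSpace (lp (fun _ : G => ℝ) ∞) :=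
  ⨅ a : lp (fun _ : G => ℝ) 1,
    TopologicalSpace.induced (fun b : lp (fun _ : G => ℝ) ∞ => ∑' g : G, a g * b g)
      inferInstance

/-- The ultra-weak topology on `ℓ∞(G, X)` induced by a subspace `V ⊆ X*`: the coarsest
topology making each `T_φ : ℓ∞(G, X) → ℓ∞(G)`, `(T_φ f)(g) = φ(f_g)`, continuous for
`φ ∈ V`, with `ℓ∞(G)` carrying its weak-* topology as the dual of `ℓ₁(G)`; equivalently,
the coarsest topology making `f ↦ ∑_g a_g φ(f_g)` continuous for all `φ ∈ V`,
`a ∈ ℓ₁(G)`. -/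
noncomputable def ultraweak (V : Submodule ℝ (X →L[ℝ] ℝ)) :
    TopologicalSpace (lp (fun _ : G => X) ∞) :=
  ⨅ (φ : V) (a : lp (fun _ : G => ℝ) 1),
    TopologicalSpace.induced
      (fun f : lp (fun _ : G => X) ∞ => ∑' g : G, a g * (φ : X →L[ℝ] ℝ) (f g))
      inferInstance

end topologies

section auxlemmas

open Filter Topology
open scoped Classical

variable {G : Type*} [Group G]
variable {X : Type*} [NormedAddCommGroup X] [NormedSpace ℝ X]

/-- indicator of `{g}` in `ℓ∞(G)` -/
noncomputable def indic (g : G) : lp (fun _ : G => ℝ) ∞ :=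
  linfElem (fun h => if h = g then (1:ℝ) else 0) 1
    (by intro h; dsimp; split <;> simp)

/-- indicator of the complement of `{g}` in `ℓ∞(G)` -/
noncomputable def coindic (g : G) : lp (fun _ : G => ℝ) ∞ :=
  linfElem (fun h => if h = g then (0:ℝ) else 1) 1
    (by intro h; dsimp; split <;> simp)

@[simp] lemma indic_apply (g h : G) : indic g h = if h = g then (1:ℝ) else 0 := rfl
@[simp] lemma coindic_apply (g h : G) : coindic g h = if h = g then (0:ℝ) else 1 := rfl

lemma indic_nonneg (g h : G) : (0:ℝ) ≤ indic g h := by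
  rw [indic_apply]; split <;> norm_num

lemma coindic_nonneg (g h : G) : (0:ℝ) ≤ coindic g h := by
  rw [coindic_apply]; split <;> norm_num

lemma indic_add_coindic (g h : G) : indic g h + coindic g h = 1 := by
  rw [indic_apply, coindic_apply]; split <;> norm_num

lemma bullet_apply {a : lp (fun _ : G => ℝ) ∞} {f : lp (fun _ : G => X) ∞} (h : G) :
    bullet a f h = a h • f h := rfl

lemma exists_patch (K : Set (lp (fun _ : G => X) ∞)) (hconv : LinfConvex K)
    (α : G → K → K) (κ₀ : K) (F : Finset G) :
    ∃ y : K, ∀ h : G, (y : lp (fun _ : G => X) ∞) h =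
      if h ∈ F then ((α h κ₀ : K) : lp (fun _ : G => X) ∞) h
      else (κ₀ : lp (fun _ : G => X) ∞) h := by
  classical
  induction F using Finset.induction_on with
  | empty => exact ⟨κ₀, by simp⟩
  | @insert g F hg ih =>
    obtain ⟨y, hy⟩ := ih
    set z : lp (fun _ : G => X) ∞ :=
      bullet (indic g) ↑(α g κ₀) + bullet (coindic g) ↑y with hzdef
    have hzK : z ∈ K := by
      have := hconv 2 ![indic g, coindic g] ![↑(α g κ₀), ↑y]
        (by intro i h; fin_cases i
            · exact indic_nonneg g h
            · exact coindic_nonneg g h)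
        (by intro h; rw [Fin.sum_univ_two]; exact indic_add_coindic g h)
        (by intro i; fin_cases i
            · exact (α g κ₀).2
            · exact y.2)
      rwa [Fin.sum_univ_two] at this
    refine ⟨⟨z, hzK⟩, ?_⟩
    intro h
    have hz : z h = indic g h • ((α g κ₀ : K) : lp (fun _ : G => X) ∞) h
        + coindic g h • (y : lp (fun _ : G => X) ∞) h := by
      rw [hzdef, lp.coeFn_add]; rfl
    by_cases hhg : h = g
    · subst hhg
      rw [hz]
      simp
    · have : z h = (y : lp (fun _ : G => X) ∞) h := by
        simp [hz, hhg]
      show z h = _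
      rw [this, hy h]
      simp [Finset.mem_insert, hhg]

lemma eval_cont (G : Type*) [Group G] (g : G) :
    @Continuous _ _ (wstarLinf G) _ (fun b : lp (fun _ : G => ℝ) ∞ => b g) := by
  classical
  have hmem : Memℓp (fun h : G => if h = g then (1:ℝ) else 0) 1 := by
    apply memℓp_gen
    apply summable_of_ne_finset_zero (s := {g})
    intro h hh
    simp only [Finset.mem_singleton] at hh
    simp [hh]
  set a : lp (fun _ : G => ℝ) 1 := ⟨fun h => if h = g then (1:ℝ) else 0, hmem⟩ with ha
  have key : (fun b : lp (fun _ : G => ℝ) ∞ => b g)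
      = fun b => ∑' h : G, a h * b h := by
    funext b
    rw [tsum_eq_single g]
    · simp [ha]
    · intro h hh; simp [ha, hh]
  rw [key, wstarLinf]
  exact continuous_iInf_dom continuous_induced_dom

end auxlemmas

/-- **A barycenter for the weak invariant expectation.**  Let `G` be a finitely generated
group, `X` a real Banach space, `V ⊆ X*` a subspace, and `K ⊆ ℓ∞(G, X)` a nonempty,
bounded, `ℓ∞(G)`-convex subset which is compact in the ultra-weak topology induced by
`V`.  Let `α` be a `G`-affine action of `G` on `K` and fix `κ₀ ∈ K`.  Then there exists
`x₀ ∈ K` such that for every `ℓ∞(G)`-convex map `T : K → ℓ∞(G)` which is continuous from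
the ultra-weak topology on `K` to the weak-* topology of `ℓ∞(G)`, one has
`T x₀ = E (f_{[T]})`, i.e. `(T x₀)(g) = (T (α_g κ₀))(g)` for all `g ∈ G`. -/


theorem exists_barycenter
    {G : Type*} [Group G] [Group.FG G]
    {X : Type*} [NormedAddCommGroup X] [NormedSpace ℝ X] [CompleteSpace X]
    (V : Submodule ℝ (X →L[ℝ] ℝ))
    (K : Set (lp (fun _ : G => X) ∞))
    (hne : K.Nonempty)
    (hbdd : ∃ C : ℝ, ∀ f ∈ K, ‖f‖ ≤ C)
    (hconv : LinfConvex K)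
    (hcpt : @IsCompact _ (ultraweak G X V) K)
    (α : G → K → K) (hα : IsGAffineAction K α) (κ₀ : K) :
    ∃ x₀ : K, ∀ T : K → lp (fun _ : G => ℝ) ∞,
      IsLinfConvexMap K T →
      @Continuous _ _ (TopologicalSpace.induced Subtype.val (ultraweak G X V))
        (wstarLinf G) T →
      ∀ g : G, T x₀ g = T (α g κ₀) g := by
  classical
  letI : TopologicalSpace (lp (fun _ : G => X) ∞) := ultraweak G X V
  choose xF hxF using fun F : Finset G => exists_patch K hconv α κ₀ F
  have hKcpt : IsCompact (Set.univ : Set K) := isCompact_iff_isCompact_univ.mp hcpt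
  haveI : Filter.NeBot (Filter.atTop : Filter (Finset G)) := Filter.atTop_neBot
  obtain ⟨x₀, -, hx₀⟩ := hKcpt.exists_clusterPt (f := Filter.map xF Filter.atTop)
    (Filter.le_principal_iff.mpr (by simp))
  refine ⟨x₀, ?_⟩
  intro T hTconv hTcont g
  have hψ : @Continuous K ℝ _ _ (fun x => T x g) :=
    @Continuous.comp K _ ℝ _ (wstarLinf G) _ T (fun b => b g) (eval_cont G g) hTcont
  have hclus := hx₀.map hψ.continuousAt (Filter.tendsto_map (f := fun x : K => T x g))
  rw [Filter.map_map] at hclus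
  set c := T (α g κ₀) g with hc
  have hev : ∀ᶠ F in Filter.atTop, T (xF F) g = c := by
    filter_upwards [Filter.eventually_ge_atTop ({g} : Finset G)] with F hF
    have hgF : g ∈ F := hF (Finset.mem_singleton_self g)
    set y := xF (F.erase g) with hy
    have hco : ((xF F : K) : lp (fun _ : G => X) ∞)
        = bullet (indic g) ↑(α g κ₀) + bullet (coindic g) ↑y := by
      apply lp.ext
      funext h
      rw [lp.coeFn_add, Pi.add_apply, bullet_apply, bullet_apply, hxF]
      by_cases hhg : h = g
      · subst hhg; simp [hgF]
      · rw [hy, hxF]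
        simp [hhg, Finset.mem_erase]
    have hT := hTconv (indic g) (coindic g) (indic_nonneg g) (coindic_nonneg g)
      (indic_add_coindic g) (α g κ₀) y (xF F) hco
    have heval : T (xF F) g = indic g g • T (α g κ₀) g + coindic g g • T y g := by
      rw [hT, lp.coeFn_add]; rfl
    simpa using heval
  have hle : Filter.map ((fun x : K => T x g) ∘ xF) Filter.atTop ≤ Filter.principal {c} := by
    rw [Filter.le_principal_iff, Filter.mem_map]
    filter_upwards [hev] with F hF
    simpa using hF
  have hmem : T x₀ g ∈ closure ({c} : Set ℝ) :=
    mem_closure_iff_clusterPt.mpr (hclus.mono hle)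
  simpa using hmem
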